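/- Let n ≥ 1, let ρ be a positive semidefinite 2ⁿ×2ⁿ complex matrix with tr(ρ) = 1, and let O be a Hermitian 2ⁿ×2ⁿ complex matrix with tr(O) = 0. Define 𝒞⁽ᵛ⁾ = Σ_{x,y,z ∈ {0,1}ⁿ} ( |x x z⟩ + |x z x⟩ + |z x x⟩ )( ⟨y y z| + ⟨y z y| + ⟨z y y| ), a matrix indexed by triples of bit strings. Then | tr( 𝒞⁽ᵛ⁾ (ρ ⊗ O ⊗ O) ) | ≤ 7 tr(O²). -/

import Mathlib

open Finset Matrix
open scoped ComplexOrder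

/-- Bit strings of length `n`. -/
abbrev Bits (n : ℕ) := Fin n → Fin 2

/-- Triples of bit strings. -/
abbrev Bits3 (n : ℕ) := Bits n × Bits n × Bits n

/-- The standard basis vector `|a b c⟩` of `ℂ^{({0,1}ⁿ)³}`. -/
def ket3 {n : ℕ} (a b c : Bits n) : Bits3 n → ℂ :=
  fun p => if p = (a, b, c) then 1 else 0

/-- The Kronecker product `P ⊗ Q ⊗ R`, a matrix indexed by triples of bit strings. -/
def kron3 {ι : Type*} (P Q R : Matrix ι ι ℂ) : Matrix (ι × ι × ι) (ι × ι × ι) ℂ :=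
  Matrix.of fun p q => P p.1 q.1 * Q p.2.1 q.2.1 * R p.2.2 q.2.2

/-- The matrix `𝒞⁽ᵛ⁾ = Σ_{x,y,z} (|xxz⟩+|xzx⟩+|zxx⟩)(⟨yyz|+⟨yzy|+⟨zyy|)`. -/
noncomputable def Cv (n : ℕ) : Matrix (Bits3 n) (Bits3 n) ℂ :=
  ∑ x : Bits n, ∑ y : Bits n, ∑ z : Bits n,
    Matrix.vecMulVec (ket3 x x z + ket3 x z x + ket3 z x x)
      (ket3 y y z + ket3 y z y + ket3 z y y)

namespace CvAux

variable {ι : Type*} [Fintype ι]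

/-- The (real) Frobenius norm of a complex matrix. -/
noncomputable def fro (A : Matrix ι ι ℂ) : ℝ :=
  Real.sqrt (∑ i, ∑ j, ‖A i j‖ ^ 2)

lemma fro_nonneg (A : Matrix ι ι ℂ) : 0 ≤ fro A := Real.sqrt_nonneg _

lemma sq_fro (A : Matrix ι ι ℂ) : fro A ^ 2 = ∑ i, ∑ j, ‖A i j‖ ^ 2 :=
  Real.sq_sqrt (by positivity)

lemma abs_sum_mul_le {κ : Type*} [Fintype κ] (v w : κ → ℂ) :
    ‖∑ i, v i * w i‖ ≤
      Real.sqrt (∑ i, ‖v i‖ ^ 2) * Real.sqrt (∑ i, ‖w i‖ ^ 2) := by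
  have h1 : ‖∑ i, v i * w i‖ ≤ ∑ i, ‖v i‖ * ‖w i‖ := by
    refine (norm_sum_le Finset.univ (fun i => v i * w i)).trans_eq ?_
    exact Finset.sum_congr rfl fun i _ => norm_mul (v i) (w i)
  exact h1.trans (Real.sum_mul_le_sqrt_mul_sqrt _ _ _)

lemma abs_trace_mul_le (A B : Matrix ι ι ℂ) :
    ‖(A * B).trace‖ ≤ fro A * fro B := by
  have h : (A * B).trace = ∑ p : ι × ι, A p.1 p.2 * B p.2 p.1 := by
    rw [Fintype.sum_prod_type]
    simp [Matrix.trace, Matrix.diag, Matrix.mul_apply]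
  rw [h]
  refine (abs_sum_mul_le _ _).trans_eq ?_
  have e1 : (∑ p : ι × ι, ‖A p.1 p.2‖ ^ 2) = ∑ i, ∑ j, ‖A i j‖ ^ 2 :=
    Fintype.sum_prod_type _
  have e2 : (∑ p : ι × ι, ‖B p.2 p.1‖ ^ 2) = ∑ i, ∑ j, ‖B i j‖ ^ 2 := by
    rw [Fintype.sum_prod_type]
    exact Finset.sum_comm
  rw [e1, e2]; rfl

lemma fro_mul_le (A B : Matrix ι ι ℂ) : fro (A * B) ≤ fro A * fro B := by
  have h2 : fro (A * B) ^ 2 ≤ (fro A * fro B) ^ 2 := by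
    rw [sq_fro, mul_pow, sq_fro, sq_fro]
    have hle : ∀ i k : ι, ‖(A * B) i k‖ ^ 2 ≤
        (∑ j, ‖A i j‖ ^ 2) * (∑ j, ‖B j k‖ ^ 2) := by
      intro i k
      have h := abs_sum_mul_le (fun j => A i j) (fun j => B j k)
      rw [Matrix.mul_apply]
      calc ‖∑ j, A i j * B j k‖ ^ 2
          ≤ (Real.sqrt (∑ j, ‖A i j‖ ^ 2) *
             Real.sqrt (∑ j, ‖B j k‖ ^ 2)) ^ 2 :=
            pow_le_pow_left₀ (norm_nonneg _) h 2
        _ = _ := by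
            rw [mul_pow, Real.sq_sqrt (by positivity), Real.sq_sqrt (by positivity)]
    calc (∑ i, ∑ k, ‖(A * B) i k‖ ^ 2)
        ≤ ∑ i, ∑ k, (∑ j, ‖A i j‖ ^ 2) * (∑ j, ‖B j k‖ ^ 2) :=
          Finset.sum_le_sum fun i _ => Finset.sum_le_sum fun k _ => hle i k
      _ = (∑ i, ∑ j, ‖A i j‖ ^ 2) * (∑ j, ∑ k, ‖B j k‖ ^ 2) := by
          rw [Finset.sum_mul]
          exact Finset.sum_congr rfl fun i _ => by
            rw [← Finset.mul_sum]; exact congrArg _ Finset.sum_comm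
  have hnn : 0 ≤ fro A * fro B := mul_nonneg (fro_nonneg _) (fro_nonneg _)
  nlinarith [fro_nonneg (A * B)]

lemma fro_transpose (A : Matrix ι ι ℂ) : fro Aᵀ = fro A := by
  unfold fro
  congr 1
  simp only [Matrix.transpose_apply]
  exact Finset.sum_comm

lemma fro_conjTranspose (A : Matrix ι ι ℂ) : fro Aᴴ = fro A := by
  unfold fro
  congr 1
  simp only [Matrix.conjTranspose_apply, RCLike.star_def, Complex.norm_conj]
  exact Finset.sum_comm

lemma key_bound [DecidableEq ι] (ρ : Matrix ι ι ℂ) (hρ : ρ.PosSemidef)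
    (hρ1 : ρ.trace = 1) (X Y : Matrix ι ι ℂ) :
    ‖∑ a, ∑ b, ∑ c, ρ a b * X b c * Y c a‖ ≤ fro X * fro Y := by
  have htr : (∑ a, ∑ b, ∑ c, ρ a b * X b c * Y c a) = (ρ * X * Y).trace := by
    simp only [Matrix.trace, Matrix.diag, Matrix.mul_apply, Finset.sum_mul]
    exact Finset.sum_congr rfl fun a _ => Finset.sum_comm
  rw [htr]
  obtain ⟨D, rfl⟩ : ∃ D : Matrix ι ι ℂ, ρ = Dᴴ * D := by
    open scoped MatrixOrder Matrix.Norms.L2Operator in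
    exact (letI : CStarAlgebra (Matrix ι ι ℂ) := Matrix.instCStarAlgebra
      CStarAlgebra.nonneg_iff_eq_star_mul_self.mp hρ.nonneg)
  have hsq : fro D ^ 2 = 1 := by
    have hsum : ((∑ i, ∑ j, (Complex.normSq (D j i) : ℂ))) = 1 := by
      rw [← hρ1]
      simp only [Matrix.trace, Matrix.diag, Matrix.mul_apply, Matrix.conjTranspose_apply,
        RCLike.star_def]
      exact Finset.sum_congr rfl fun i _ => Finset.sum_congr rfl fun j _ =>
        (Complex.normSq_eq_conj_mul_self).symm ▸ rfl
    have hre : (∑ i, ∑ j, Complex.normSq (D j i)) = 1 := by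
      exact_mod_cast (by push_cast at hsum ⊢; exact hsum :
        ((∑ i, ∑ j, Complex.normSq (D j i) : ℝ) : ℂ) = 1)
    rw [sq_fro]
    simp only [Complex.sq_norm]
    rw [Finset.sum_comm]
    exact hre
  have hD : fro D = 1 := by nlinarith [fro_nonneg D]
  have h1 : (Dᴴ * D * X * Y).trace = ((D * X) * (Y * Dᴴ)).trace := by
    rw [Matrix.mul_assoc (Dᴴ * D) X Y, Matrix.mul_assoc Dᴴ D (X * Y), Matrix.trace_mul_comm,
      ← Matrix.mul_assoc D X Y, Matrix.mul_assoc (D * X) Y Dᴴ]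
  rw [h1]
  calc ‖((D * X) * (Y * Dᴴ)).trace‖ ≤ fro (D * X) * fro (Y * Dᴴ) :=
        abs_trace_mul_le _ _
    _ ≤ (fro D * fro X) * (fro Y * fro Dᴴ) := by
        apply mul_le_mul (fro_mul_le _ _) (fro_mul_le _ _) (fro_nonneg _)
        exact mul_nonneg (fro_nonneg _) (fro_nonneg _)
    _ = fro X * fro Y := by rw [fro_conjTranspose, hD]; ring

lemma trace_vecMulVec_mul {m : Type*} [Fintype m] (u v : m → ℂ) (K : Matrix m m ℂ) :
    (Matrix.vecMulVec u v * K).trace = ∑ p, ∑ q, u p * v q * K q p := by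
  simp only [Matrix.trace, Matrix.diag, Matrix.mul_apply, Matrix.vecMulVec_apply]

lemma collapse {n : ℕ} (a b c d e f : Bits n) (K : Matrix (Bits3 n) (Bits3 n) ℂ) :
    (∑ p : Bits3 n, ∑ q : Bits3 n, ket3 a b c p * ket3 d e f q * K q p)
      = K (d, e, f) (a, b, c) := by
  simp [ket3, ite_mul, mul_ite]

lemma sum3_swap12 {α : Type*} [Fintype α] (f : α → α → α → ℂ) :
    ∑ x : α, ∑ y : α, ∑ z : α, f x y z = ∑ y : α, ∑ x : α, ∑ z : α, f x y z :=
  Finset.sum_comm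

lemma sum3_rot {α : Type*} [Fintype α] (f : α → α → α → ℂ) :
    ∑ x : α, ∑ y : α, ∑ z : α, f x y z = ∑ y : α, ∑ z : α, ∑ x : α, f x y z := by
  rw [sum3_swap12]
  exact Finset.sum_congr rfl fun y _ => Finset.sum_comm

lemma sum3_rot2 {α : Type*} [Fintype α] (f : α → α → α → ℂ) :
    ∑ x : α, ∑ y : α, ∑ z : α, f x y z = ∑ z : α, ∑ x : α, ∑ y : α, f x y z :=
  (sum3_rot f).trans (sum3_rot fun a b c => f c a b)

end CvAux

set_option maxHeartbeats 1000000 in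
open CvAux in
/-- `|tr(𝒞⁽ᵛ⁾ (ρ ⊗ O ⊗ O))| ≤ 7 tr(O²)`. -/
theorem Cv_bound (n : ℕ) (hn : 1 ≤ n)
    (ρ O : Matrix (Bits n) (Bits n) ℂ)
    (hρ : ρ.PosSemidef) (hρtr : ρ.trace = 1)
    (hO : O.IsHermitian) (hOtr : O.trace = 0) :
    ‖(Cv n * kron3 ρ O O).trace‖ ≤ 7 * ((O * O).trace).re := by
  have hOz : (∑ z : Bits n, O z z) = 0 := by simpa [Matrix.trace, Matrix.diag] using hOtr
  have hρz : (∑ z : Bits n, ρ z z) = 1 := by simpa [Matrix.trace, Matrix.diag] using hρtr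
  -- expand the trace
  have hexp : (Cv n * kron3 ρ O O).trace
      = ∑ x : Bits n, ∑ y : Bits n, ∑ z : Bits n,
          (2 * ((ρ y x * O y x) * O z z) + 2 * (ρ y x * O y z * O z x)
            + 2 * (ρ y z * O y x * O z x) + 2 * (ρ z x * O y x * O y z)
            + ρ z z * (O y x * O y x)) := by
    rw [Cv]
    simp only [Finset.sum_mul, Matrix.trace_sum]
    refine Finset.sum_congr rfl fun x _ => Finset.sum_congr rfl fun y _ =>
      Finset.sum_congr rfl fun z _ => ?_
    rw [trace_vecMulVec_mul]
    simp only [Pi.add_apply, add_mul, mul_add, Finset.sum_add_distrib]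
    rw [collapse, collapse, collapse, collapse, collapse, collapse, collapse, collapse,
      collapse]
    simp only [kron3, Matrix.of_apply]
    ring
  have hexp2 : (Cv n * kron3 ρ O O).trace
      = 2 * (∑ x : Bits n, ∑ y : Bits n, ∑ z : Bits n, (ρ y x * O y x) * O z z)
        + 2 * (∑ x : Bits n, ∑ y : Bits n, ∑ z : Bits n, ρ y x * O y z * O z x)
        + 2 * (∑ x : Bits n, ∑ y : Bits n, ∑ z : Bits n, ρ y z * O y x * O z x)
        + 2 * (∑ x : Bits n, ∑ y : Bits n, ∑ z : Bits n, ρ z x * O y x * O y z)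
        + (∑ x : Bits n, ∑ y : Bits n, ∑ z : Bits n, ρ z z * (O y x * O y x)) := by
    rw [hexp]
    simp only [Finset.sum_add_distrib, ← Finset.mul_sum]
  -- the first sum vanishes
  have hA1 : (∑ x : Bits n, ∑ y : Bits n, ∑ z : Bits n, (ρ y x * O y x) * O z z) = 0 := by
    refine Finset.sum_eq_zero fun x _ => Finset.sum_eq_zero fun y _ => ?_
    rw [← Finset.mul_sum, hOz, mul_zero]
  -- the last sum simplifies
  have hA5e : (∑ x : Bits n, ∑ y : Bits n, ∑ z : Bits n, ρ z z * (O y x * O y x))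
      = ∑ x : Bits n, ∑ y : Bits n, O y x * O y x := by
    refine Finset.sum_congr rfl fun x _ => Finset.sum_congr rfl fun y _ => ?_
    rw [← Finset.sum_mul, hρz, one_mul]
  -- bounds for the three middle sums
  have hA2 : ‖∑ x : Bits n, ∑ y : Bits n, ∑ z : Bits n, ρ y x * O y z * O z x‖
      ≤ fro O * fro O := by
    have e : (∑ x : Bits n, ∑ y : Bits n, ∑ z : Bits n, ρ y x * O y z * O z x)
        = ∑ a : Bits n, ∑ b : Bits n, ∑ c : Bits n, ρ a b * Oᵀ b c * Oᵀ c a := by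
      rw [sum3_swap12 fun x y z => ρ y x * O y z * O z x]
      refine Finset.sum_congr rfl fun y _ => Finset.sum_congr rfl fun x _ =>
        Finset.sum_congr rfl fun z _ => ?_
      simp only [Matrix.transpose_apply] <;> ring
    rw [e]
    have h := key_bound ρ hρ hρtr Oᵀ Oᵀ
    rwa [fro_transpose] at h
  have hA3 : ‖∑ x : Bits n, ∑ y : Bits n, ∑ z : Bits n, ρ y z * O y x * O z x‖
      ≤ fro O * fro O := by
    have e : (∑ x : Bits n, ∑ y : Bits n, ∑ z : Bits n, ρ y z * O y x * O z x)
        = ∑ a : Bits n, ∑ b : Bits n, ∑ c : Bits n, ρ a b * O b c * Oᵀ c a := by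
      rw [sum3_rot fun x y z => ρ y z * O y x * O z x]
      refine Finset.sum_congr rfl fun y _ => Finset.sum_congr rfl fun z _ =>
        Finset.sum_congr rfl fun x _ => ?_
      simp only [Matrix.transpose_apply] <;> ring
    rw [e]
    have h := key_bound ρ hρ hρtr O Oᵀ
    rwa [fro_transpose] at h
  have hA4 : ‖∑ x : Bits n, ∑ y : Bits n, ∑ z : Bits n, ρ z x * O y x * O y z‖
      ≤ fro O * fro O := by
    have e : (∑ x : Bits n, ∑ y : Bits n, ∑ z : Bits n, ρ z x * O y x * O y z)
        = ∑ a : Bits n, ∑ b : Bits n, ∑ c : Bits n, ρ a b * Oᵀ b c * O c a := by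
      rw [sum3_rot2 fun x y z => ρ z x * O y x * O y z]
      refine Finset.sum_congr rfl fun z _ => Finset.sum_congr rfl fun x _ =>
        Finset.sum_congr rfl fun y _ => ?_
      simp only [Matrix.transpose_apply] <;> ring
    rw [e]
    have h := key_bound ρ hρ hρtr Oᵀ O
    rwa [fro_transpose] at h
  have hA5 : ‖∑ x : Bits n, ∑ y : Bits n, O y x * O y x‖ ≤ fro O * fro O := by
    have h : (∑ x : Bits n, ∑ y : Bits n, O y x * O y x)
        = ∑ p : Bits n × Bits n, O p.2 p.1 * O p.2 p.1 :=
      (Fintype.sum_prod_type (fun p : Bits n × Bits n => O p.2 p.1 * O p.2 p.1)).symm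
    rw [h]
    refine (abs_sum_mul_le _ _).trans_eq ?_
    have e : (∑ p : Bits n × Bits n, ‖O p.2 p.1‖ ^ 2)
        = ∑ i, ∑ j, ‖O i j‖ ^ 2 := by
      rw [Fintype.sum_prod_type (fun p : Bits n × Bits n => ‖O p.2 p.1‖ ^ 2)]
      exact Finset.sum_comm
    rw [e]; rfl
  -- tr(O²) = (fro O)²
  have h7 : ((O * O).trace).re = fro O * fro O := by
    have hconj : ∀ a b : Bits n, O b a = (starRingEnd ℂ) (O a b) := by
      intro a b
      conv_lhs => rw [← hO]
      simp [Matrix.conjTranspose_apply]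
    have htr : (O * O).trace = ((fro O * fro O : ℝ) : ℂ) := by
      have hsq : fro O * fro O = fro O ^ 2 := (sq (fro O)).symm
      rw [hsq, sq_fro]
      simp only [Matrix.trace, Matrix.diag, Matrix.mul_apply]
      push_cast
      refine Finset.sum_congr rfl fun a _ => Finset.sum_congr rfl fun b _ => ?_
      rw [hconj a b, Complex.mul_conj, Complex.normSq_eq_norm_sq]
      push_cast
      ring
    rw [htr, Complex.ofReal_re]
  -- put everything together
  rw [hexp2, hA1, hA5e, mul_zero, zero_add, h7]
  have habs2 : ∀ w : ℂ, ‖2 * w‖ = 2 * ‖w‖ := fun w => by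
    rw [norm_mul, Complex.norm_two]
  calc ‖2 * (∑ x : Bits n, ∑ y : Bits n, ∑ z : Bits n, ρ y x * O y z * O z x)
          + 2 * (∑ x : Bits n, ∑ y : Bits n, ∑ z : Bits n, ρ y z * O y x * O z x)
          + 2 * (∑ x : Bits n, ∑ y : Bits n, ∑ z : Bits n, ρ z x * O y x * O y z)
          + (∑ x : Bits n, ∑ y : Bits n, O y x * O y x)‖
      ≤ ‖2 * (∑ x : Bits n, ∑ y : Bits n, ∑ z : Bits n, ρ y x * O y z * O z x)‖
        + ‖2 * (∑ x : Bits n, ∑ y : Bits n, ∑ z : Bits n, ρ y z * O y x * O z x)‖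
        + ‖2 * (∑ x : Bits n, ∑ y : Bits n, ∑ z : Bits n, ρ z x * O y x * O y z)‖
        + ‖∑ x : Bits n, ∑ y : Bits n, O y x * O y x‖ := by
        refine (norm_add_le _ _).trans (add_le_add_left ((norm_add_le _ _).trans
          (add_le_add_left (norm_add_le _ _) _)) _)
    _ = 2 * ‖∑ x : Bits n, ∑ y : Bits n, ∑ z : Bits n, ρ y x * O y z * O z x‖
        + 2 * ‖∑ x : Bits n, ∑ y : Bits n, ∑ z : Bits n, ρ y z * O y x * O z x‖
        + 2 * ‖∑ x : Bits n, ∑ y : Bits n, ∑ z : Bits n, ρ z x * O y x * O y z‖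
        + ‖∑ x : Bits n, ∑ y : Bits n, O y x * O y x‖ := by
        rw [habs2, habs2, habs2]
    _ ≤ 7 * (fro O * fro O) := by linarith [hA2, hA3, hA4, hA5]
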